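/- Let F : ℝ → ℝ be four times continuously differentiable on a neighborhood of x*, let S = sup of |F''''| on that neighborhood be finite, and let M > S/24. Suppose x* is a local minimum of F and F(x* + h) − F(x*) ≥ M·h⁴ for all h sufficiently small. Then F''(x*) > 0, i.e. x* is a nondegenerate minimum. -/

import Mathlib

open Set

lemma my_within_eq_global {F : ℝ → ℝ} {U : Set ℝ} (hU : IsOpen U)
    (hC : ContDiffOn ℝ 4 F U) {a b : ℝ} (hab : a < b) (hsub : Icc a b ⊆ U)
    {n : ℕ} (hn : (n : WithTop ℕ∞) ≤ 4) {y : ℝ} (hy : y ∈ Icc a b) :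
    iteratedDerivWithin n F (Icc a b) y = iteratedDeriv n F y := by
  have h := ((hC.ftaylorSeriesWithin hU.uniqueDiffOn).mono
    hsub).eq_iteratedFDerivWithin_of_uniqueDiffOn hn (uniqueDiffOn_Icc hab) hy
  rw [iteratedDerivWithin_eq_iteratedFDerivWithin, iteratedDeriv_eq_iteratedFDeriv, ← h]
  rw [show ftaylorSeriesWithin ℝ F U y n = iteratedFDerivWithin ℝ n F U y from rfl,
    iteratedFDerivWithin_of_isOpen n hU (hsub hy)]

lemma my_taylor4 {F : ℝ → ℝ} {U : Set ℝ} (hU : IsOpen U) (hC : ContDiffOn ℝ 4 F U)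
    {x₀ h : ℝ} (hh : 0 < h) (hsub : Icc x₀ (x₀ + h) ⊆ U) :
    ∃ ξ ∈ Ioo x₀ (x₀ + h), F (x₀ + h) - F x₀ =
      iteratedDeriv 1 F x₀ * h + iteratedDeriv 2 F x₀ / 2 * h ^ 2 +
      iteratedDeriv 3 F x₀ / 6 * h ^ 3 + iteratedDeriv 4 F ξ * h ^ 4 / 24 := by
  have hab : x₀ < x₀ + h := by linarith
  have hCicc : ContDiffOn ℝ 4 F (Icc x₀ (x₀ + h)) := hC.mono hsub
  obtain ⟨ξ, hξ, heq⟩ := taylor_mean_remainder_lagrange (n := 3) hab.ne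
    (by rw [uIcc_of_le hab.le]; exact hCicc.of_le (by norm_num))
    (by rw [uIcc_of_le hab.le, uIoo_of_le hab.le]; exact
      ((hCicc.differentiableOn_iteratedDerivWithin (by norm_num)
      (uniqueDiffOn_Icc hab)).mono Ioo_subset_Icc_self))
  rw [uIcc_of_le hab.le] at heq
  rw [uIoo_of_le hab.le] at hξ
  refine ⟨ξ, hξ, ?_⟩
  have W : ∀ n : ℕ, (n : WithTop ℕ∞) ≤ 4 →
      iteratedDerivWithin n F (Icc x₀ (x₀ + h)) x₀ = iteratedDeriv n F x₀ :=
    fun n hn => my_within_eq_global hU hC hab hsub hn (left_mem_Icc.2 hab.le)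
  have Wξ : iteratedDerivWithin 4 F (Icc x₀ (x₀ + h)) ξ = iteratedDeriv 4 F ξ :=
    my_within_eq_global hU hC hab hsub le_rfl (Ioo_subset_Icc_self hξ)
  have expand : taylorWithinEval F 3 (Icc x₀ (x₀ + h)) x₀ (x₀ + h) =
      F x₀ + iteratedDeriv 1 F x₀ * h + iteratedDeriv 2 F x₀ / 2 * h ^ 2 +
      iteratedDeriv 3 F x₀ / 6 * h ^ 3 := by
    rw [taylor_within_apply]
    rw [Finset.sum_range_succ, Finset.sum_range_succ, Finset.sum_range_succ,
      Finset.sum_range_succ, Finset.sum_range_zero]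
    rw [W 0 (by norm_num), W 1 (by norm_num), W 2 (by norm_num), W 3 (by norm_num)]
    simp [iteratedDeriv_zero, Nat.factorial]
    ring
  rw [expand, Wξ, show x₀ + h - x₀ = h by ring] at heq
  norm_num [Nat.factorial] at heq
  rw [iteratedDeriv_one]
  linarith [heq]

lemma my_taylor4_neg {F : ℝ → ℝ} {U : Set ℝ} (hU : IsOpen U) (hC : ContDiffOn ℝ 4 F U)
    {x₀ h : ℝ} (hh : h < 0) (hsub : Icc (x₀ + h) x₀ ⊆ U) :
    ∃ ξ ∈ Ioo (x₀ + h) x₀, F (x₀ + h) - F x₀ =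
      iteratedDeriv 1 F x₀ * h + iteratedDeriv 2 F x₀ / 2 * h ^ 2 +
      iteratedDeriv 3 F x₀ / 6 * h ^ 3 + iteratedDeriv 4 F ξ * h ^ 4 / 24 := by
  set G : ℝ → ℝ := fun t => F (2 * x₀ - t) with hGdef
  set U' : Set ℝ := (fun t : ℝ => 2 * x₀ - t) ⁻¹' U with hU'def
  have hcont : ContDiff ℝ 4 (fun t : ℝ => 2 * x₀ - t) := (contDiff_const.sub contDiff_id)
  have hU' : IsOpen U' := hU.preimage hcont.continuous
  have hCG : ContDiffOn ℝ 4 G U' := hC.comp hcont.contDiffOn (fun t ht => ht)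
  have hGd : ∀ (n : ℕ) (t : ℝ), iteratedDeriv n G t =
      (-1 : ℝ) ^ n * iteratedDeriv n F (2 * x₀ - t) := by
    intro n t
    have h2 := iteratedDeriv_comp_neg n (fun z => F (2 * x₀ + z)) t
    rw [iteratedDeriv_comp_const_add] at h2
    beta_reduce at h2
    have h1 : (fun x : ℝ => F (2 * x₀ + -x)) = G := by
      funext s; simp [hGdef, sub_eq_add_neg]
    rw [h1] at h2
    rw [h2]
    simp [smul_eq_mul, sub_eq_add_neg]
  have hsub' : Icc x₀ (x₀ + -h) ⊆ U' := by
    intro t ht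
    simp only [hU'def, Set.mem_preimage]
    apply hsub
    constructor
    · simp only [Set.mem_Icc] at ht; linarith [ht.2]
    · simp only [Set.mem_Icc] at ht; linarith [ht.1]
  obtain ⟨ξ, hξ, heq⟩ := my_taylor4 hU' hCG (by linarith : (0:ℝ) < -h) hsub'
  refine ⟨2 * x₀ - ξ, ?_, ?_⟩
  · simp only [Set.mem_Ioo] at hξ ⊢
    constructor <;> linarith [hξ.1, hξ.2]
  · have e1 : G (x₀ + -h) = F (x₀ + h) := by simp [hGdef]; ring_nf
    have e0 : G x₀ = F x₀ := by simp [hGdef]; ring_nf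
    rw [e1, e0, hGd 1, hGd 2, hGd 3, hGd 4] at heq
    have e2 : 2 * x₀ - x₀ = x₀ := by ring
    rw [e2] at heq
    rw [heq]; ring

/-- Nondegeneracy criterion (formula (3.6)): if `F` is `C⁴` on an open neighborhood `U`
of `x₀`, `|F⁗| ≤ S` on `U`, `M > S / 24`, `x₀` is a local minimum of `F` and
`F (x₀ + h) - F x₀ ≥ M h⁴` for all sufficiently small `h`, then `F'' x₀ > 0`. -/
theorem stmt_9 (F : ℝ → ℝ) (x₀ S M : ℝ) (U : Set ℝ) (hUopen : IsOpen U) (hx₀ : x₀ ∈ U)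
    (hC4 : ContDiffOn ℝ 4 F U)
    (hS : ∀ x ∈ U, |iteratedDeriv 4 F x| ≤ S)
    (hM : S / 24 < M)
    (hmin : IsLocalMin F x₀)
    (hgrow : ∀ᶠ h in nhds (0 : ℝ), M * h ^ 4 ≤ F (x₀ + h) - F x₀) :
    0 < iteratedDeriv 2 F x₀ := by
  -- neighborhood where everything holds
  obtain ⟨ε₁, hε₁, hball⟩ := Metric.isOpen_iff.mp hUopen x₀ hx₀
  obtain ⟨ε₂, hε₂, hg⟩ := Metric.eventually_nhds_iff.mp hgrow
  set t : ℝ := min (ε₁ / 2) (ε₂ / 2) with ht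
  have ht0 : 0 < t := lt_min (by linarith) (by linarith)
  have hsub : ∀ h : ℝ, |h| ≤ t → Icc x₀ (x₀ + h) ⊆ U ∧ Icc (x₀ + h) x₀ ⊆ U := by
    intro h hh
    have habs := abs_le.mp hh
    constructor <;> intro y hy <;> apply hball <;>
      simp only [Metric.mem_ball, Real.dist_eq] <;> rw [abs_lt] <;>
      simp only [Set.mem_Icc] at hy <;>
      constructor <;>
      first
        | (have := hy.1; have := hy.2; have h1 : t ≤ ε₁ / 2 := min_le_left _ _; linarith)
  have hd1 : iteratedDeriv 1 F x₀ = 0 := by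
    rw [iteratedDeriv_one]; exact hmin.deriv_eq_zero
  by_contra hc
  push_neg at hc
  -- key inequality for any small nonzero h
  have key : ∀ h : ℝ, h ≠ 0 → |h| ≤ t →
      (M - S / 24) * h ^ 4 ≤ iteratedDeriv 3 F x₀ / 6 * h ^ 3 := by
    intro h hne hh
    obtain ⟨ξ, hξU, heq⟩ : ∃ ξ ∈ U, F (x₀ + h) - F x₀ =
        iteratedDeriv 1 F x₀ * h + iteratedDeriv 2 F x₀ / 2 * h ^ 2 +
        iteratedDeriv 3 F x₀ / 6 * h ^ 3 + iteratedDeriv 4 F ξ * h ^ 4 / 24 := by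
      rcases lt_or_gt_of_ne hne with hneg | hpos
      · obtain ⟨ξ, hξ, e⟩ := my_taylor4_neg hUopen hC4 hneg (hsub h hh).2
        exact ⟨ξ, (hsub h hh).2 (Ioo_subset_Icc_self hξ), e⟩
      · obtain ⟨ξ, hξ, e⟩ := my_taylor4 hUopen hC4 hpos (hsub h hh).1
        exact ⟨ξ, (hsub h hh).1 (Ioo_subset_Icc_self hξ), e⟩
    have hgrowh : M * h ^ 4 ≤ F (x₀ + h) - F x₀ := by
      apply hg
      rw [Real.dist_eq, sub_zero]
      calc |h| ≤ t := hh
        _ ≤ ε₂ / 2 := min_le_right _ _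
        _ < ε₂ := by linarith
    have hbound : |iteratedDeriv 4 F ξ| ≤ S := hS ξ hξU
    have h4pos : 0 < h ^ 4 := by positivity
    have h2pos : 0 ≤ h ^ 2 := sq_nonneg h
    have hb : iteratedDeriv 4 F ξ * h ^ 4 / 24 ≤ S * h ^ 4 / 24 := by
      have := (abs_le.mp hbound).2
      have : iteratedDeriv 4 F ξ * h ^ 4 ≤ S * h ^ 4 :=
        mul_le_mul_of_nonneg_right this h4pos.le
      linarith
    have hc2 : iteratedDeriv 2 F x₀ / 2 * h ^ 2 ≤ 0 := by
      apply mul_nonpos_of_nonpos_of_nonneg _ h2pos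
      linarith
    rw [hd1, zero_mul] at heq
    linarith [heq, hgrowh, hb, hc2]
  -- contradiction from h = t and h = -t
  have hMS : 0 < M - S / 24 := by linarith
  have hkt := key t ht0.ne' (by rw [abs_of_pos ht0])
  have hkt' := key (-t) (by simp [ht0.ne']) (by rw [abs_neg, abs_of_pos ht0])
  have ht3 : 0 < t ^ 3 := by positivity
  have ht4 : 0 < t ^ 4 := by positivity
  have hpos3 : 0 < iteratedDeriv 3 F x₀ := by nlinarith
  have hneg3 : iteratedDeriv 3 F x₀ < 0 := by nlinarith [hkt']
  linarith
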